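/- For every sequence x = (x_j) in ℓ_p^mid(E), the supremum ‖x‖_{mid,p} := sup over (x_n*) in the unit ball of ℓ_p^w(E*) of (Σ_n Σ_j |x_n*(x_j)|^p)^{1/p} is finite. -/

import Mathlib

open Filter

noncomputable section

section Defs

variable {E : Type*}

/-- `x ∈ ℓ_p(E)`: absolutely `p`-summable sequences. -/
def MemLpSeq [NormedAddCommGroup E] (p : ℝ) (x : ℕ → E) : Prop :=
  Summable fun j => ‖x j‖ ^ p

/-- The `ℓ_p` norm `(Σ ‖x j‖^p)^(1/p)`. -/
def lpNorm [NormedAddCommGroup E] (p : ℝ) (x : ℕ → E) : ℝ :=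
  (∑' j, ‖x j‖ ^ p) ^ (1 / p)

/-- `x ∈ ℓ_p^w(E)`: weakly `p`-summable sequences. -/
def WSummable [NormedAddCommGroup E] [NormedSpace ℝ E] (p : ℝ) (x : ℕ → E) : Prop :=
  ∀ f : E →L[ℝ] ℝ, Summable fun j => |f (x j)| ^ p

/-- The weak `ℓ_p` norm `sup_{‖f‖ ≤ 1} (Σ |f (x j)|^p)^(1/p)`. -/
def wNorm [NormedAddCommGroup E] [NormedSpace ℝ E] (p : ℝ) (x : ℕ → E) : ℝ :=
  ⨆ f : {f : E →L[ℝ] ℝ // ‖f‖ ≤ 1}, (∑' j, |f.1 (x j)| ^ p) ^ (1 / p)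

/-- `x ∈ ℓ_p^{mid}(E)`: mid `p`-summable sequences. -/
def MidSummable [NormedAddCommGroup E] [NormedSpace ℝ E] (p : ℝ) (x : ℕ → E) : Prop :=
  WSummable p x ∧ ∀ xs : ℕ → E →L[ℝ] ℝ, WSummable p xs →
    Summable fun nj : ℕ × ℕ => |xs nj.1 (x nj.2)| ^ p

/-- The mid `ℓ_p` norm: sup over the unit ball of `ℓ_p^w(E*)` of the double `ℓ_p` sum. -/
def midNorm [NormedAddCommGroup E] [NormedSpace ℝ E] (p : ℝ) (x : ℕ → E) : ℝ :=
  ⨆ xs : {xs : ℕ → E →L[ℝ] ℝ // WSummable p xs ∧ wNorm p xs ≤ 1},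
    (∑' nj : ℕ × ℕ, |xs.1 nj.1 (x nj.2)| ^ p) ^ (1 / p)

/-- `x ∈ ℓ_p^u(E)`: unconditionally `p`-summable sequences (weak norms of tails tend to 0). -/
def USummable [NormedAddCommGroup E] [NormedSpace ℝ E] (p : ℝ) (x : ℕ → E) : Prop :=
  WSummable p x ∧ Tendsto (fun k => wNorm p fun j => x (j + k)) atTop (nhds 0)

/-- `x ∈ c₀₀(E)`: finitely supported sequences. -/
def FinSupp [Zero E] (x : ℕ → E) : Prop := ∃ N, ∀ j ≥ N, x j = 0

/-- Truncation of a sequence at index `k`. -/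
def trunc [Zero E] (k : ℕ) (x : ℕ → E) : ℕ → E := fun j => if j < k then x j else 0

end Defs
section Aux

variable {F : Type*} [NormedAddCommGroup F] [NormedSpace ℝ F]

lemma lp_single_add (q : ENNReal) (i : ℕ) (a b : ℝ) :
    lp.single (E := fun _ : ℕ => ℝ) q i (a + b) = lp.single q i a + lp.single q i b := by
  apply lp.ext
  funext j
  by_cases h : j = i
  · subst h
    simp [lp.single_apply_self]
  · simp [lp.single_apply_ne _ _ _ h]

/-- Banach–Steinhaus: uniform bound for weakly `p`-summable sequences. -/
lemma wsum_uniform_bound {p : ℝ} (hp : 1 ≤ p) {y : ℕ → F} (hy : WSummable p y) :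
    ∃ C : ℝ, 0 ≤ C ∧ ∀ f : F →L[ℝ] ℝ, (∑' n, |f (y n)| ^ p) ≤ C * ‖f‖ ^ p := by
  have hp0 : 0 < p := lt_of_lt_of_le one_pos hp
  set q : ENNReal := ENNReal.ofReal p with hq
  haveI : Fact (1 ≤ q) := ⟨ENNReal.one_le_ofReal.mpr hp⟩
  have hqt : q.toReal = p := ENNReal.toReal_ofReal hp0.le
  have hqt0 : 0 < q.toReal := by rw [hqt]; exact hp0
  have habs : ∀ (t : ℝ), 0 ≤ |t| ^ p := fun t => Real.rpow_nonneg (abs_nonneg _) p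
  -- the finite-truncation operators into ℓ_p
  let T : Finset ℕ → ((F →L[ℝ] ℝ) →L[ℝ] lp (fun _ : ℕ => ℝ) q) := fun s =>
    LinearMap.mkContinuous
      { toFun := fun f => ∑ j ∈ s, lp.single q j (f (y j))
        map_add' := fun f g => by
          simp only [ContinuousLinearMap.add_apply, lp_single_add, Finset.sum_add_distrib]
        map_smul' := fun c f => by
          simp only [ContinuousLinearMap.coe_smul', Pi.smul_apply, RingHom.id_apply,
            Finset.smul_sum]
          refine Finset.sum_congr rfl fun j _ => ?_
          apply lp.ext
          funext i
          by_cases h : i = j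
          · subst h
            simp [lp.single_apply_self]
          · simp [lp.single_apply_ne _ _ _ h, Pi.single_apply, h] }
      ((∑ j ∈ s, ‖y j‖ ^ p) ^ (1 / p))
      (by
        intro f
        show ‖∑ j ∈ s, lp.single q j (f (y j))‖ ≤ (∑ j ∈ s, ‖y j‖ ^ p) ^ (1 / p) * ‖f‖
        have hsum0 : (0:ℝ) ≤ ∑ j ∈ s, ‖y j‖ ^ p :=
          Finset.sum_nonneg fun j _ => Real.rpow_nonneg (norm_nonneg _) p
        have hnorm : ‖∑ j ∈ s, lp.single q j (f (y j))‖ ^ p = ∑ j ∈ s, |f (y j)| ^ p := by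
          have := lp.norm_sum_single (E := fun _ : ℕ => ℝ) hqt0 (fun j => f (y j)) s
          rw [hqt] at this
          simpa [Real.norm_eq_abs] using this
        rw [← Real.rpow_le_rpow_iff (norm_nonneg _)
          (mul_nonneg (Real.rpow_nonneg hsum0 _) (norm_nonneg f)) hp0]
        rw [hnorm, Real.mul_rpow (Real.rpow_nonneg hsum0 _) (norm_nonneg f),
          ← Real.rpow_mul hsum0, one_div_mul_cancel hp0.ne', Real.rpow_one]
        calc ∑ j ∈ s, |f (y j)| ^ p
            ≤ ∑ j ∈ s, ‖y j‖ ^ p * ‖f‖ ^ p := by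
              refine Finset.sum_le_sum fun j _ => ?_
              rw [← Real.mul_rpow (norm_nonneg _) (norm_nonneg _)]
              refine Real.rpow_le_rpow (abs_nonneg _) ?_ hp0.le
              rw [mul_comm]
              exact (f.le_opNorm (y j)).trans_eq' (Real.norm_eq_abs _).symm
          _ = (∑ j ∈ s, ‖y j‖ ^ p) * ‖f‖ ^ p := by rw [Finset.sum_mul])
  -- pointwise boundedness
  have hpt : ∀ f : F →L[ℝ] ℝ, ∃ C, ∀ s : Finset ℕ, ‖T s f‖ ≤ C := by
    intro f
    refine ⟨(∑' n, |f (y n)| ^ p) ^ (1 / p), fun s => ?_⟩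
    have hts0 : (0:ℝ) ≤ ∑' n, |f (y n)| ^ p := tsum_nonneg fun n => habs _
    rw [← Real.rpow_le_rpow_iff (norm_nonneg _) (Real.rpow_nonneg hts0 _) hp0,
      ← Real.rpow_mul hts0, one_div_mul_cancel hp0.ne', Real.rpow_one]
    have hnorm : ‖T s f‖ ^ p = ∑ j ∈ s, |f (y j)| ^ p := by
      have := lp.norm_sum_single (E := fun _ : ℕ => ℝ) hqt0 (fun j => f (y j)) s
      rw [hqt] at this
      show ‖∑ j ∈ s, lp.single q j (f (y j))‖ ^ p = ∑ j ∈ s, |f (y j)| ^ p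
      simpa [Real.norm_eq_abs] using this
    rw [hnorm]
    exact Summable.sum_le_tsum s (fun j _ => habs _) (hy f)
  obtain ⟨C', hC'⟩ := banach_steinhaus hpt
  refine ⟨(max C' 0) ^ p, Real.rpow_nonneg (le_max_right _ _) p, fun f => ?_⟩
  refine Summable.tsum_le_of_sum_le (hy f) fun s => ?_
  have hnorm : ‖T s f‖ ^ p = ∑ j ∈ s, |f (y j)| ^ p := by
    have := lp.norm_sum_single (E := fun _ : ℕ => ℝ) hqt0 (fun j => f (y j)) s
    rw [hqt] at this
    show ‖∑ j ∈ s, lp.single q j (f (y j))‖ ^ p = ∑ j ∈ s, |f (y j)| ^ p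
    simpa [Real.norm_eq_abs] using this
  rw [← hnorm, ← Real.mul_rpow (le_max_right _ _) (norm_nonneg _)]
  refine Real.rpow_le_rpow (norm_nonneg _) ?_ hp0.le
  exact ((T s).le_opNorm f).trans
    (mul_le_mul_of_nonneg_right ((hC' s).trans (le_max_left _ _)) (norm_nonneg f))

/-- If `wNorm p y ≤ 1` then every functional gives sum at most `‖f‖^p`. -/
lemma wsum_le_of_wnorm_le_one {p : ℝ} (hp : 1 ≤ p) {y : ℕ → F} (hy : WSummable p y)
    (h1 : wNorm p y ≤ 1) (f : F →L[ℝ] ℝ) : (∑' n, |f (y n)| ^ p) ≤ ‖f‖ ^ p := by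
  have hp0 : 0 < p := lt_of_lt_of_le one_pos hp
  have habs : ∀ (t : ℝ), 0 ≤ |t| ^ p := fun t => Real.rpow_nonneg (abs_nonneg _) p
  obtain ⟨C, hC0, hC⟩ := wsum_uniform_bound hp hy
  have hbdd : BddAbove (Set.range fun g : {f : F →L[ℝ] ℝ // ‖f‖ ≤ 1} =>
      (∑' j, |g.1 (y j)| ^ p) ^ (1 / p)) := by
    refine ⟨C ^ (1 / p), ?_⟩
    rintro _ ⟨g, rfl⟩
    refine Real.rpow_le_rpow (tsum_nonneg fun j => habs _) ?_ (by positivity)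
    calc ∑' j, |g.1 (y j)| ^ p ≤ C * ‖g.1‖ ^ p := hC g.1
      _ ≤ C * 1 :=
        mul_le_mul_of_nonneg_left (Real.rpow_le_one (norm_nonneg _) g.2 hp0.le) hC0
      _ = C := mul_one C
  have unit : ∀ g : F →L[ℝ] ℝ, ‖g‖ ≤ 1 → (∑' n, |g (y n)| ^ p) ≤ 1 := by
    intro g hg
    have h2 : (∑' n, |g (y n)| ^ p) ^ (1 / p) ≤ 1 :=
      le_trans (le_ciSup hbdd ⟨g, hg⟩) h1
    have h3 := Real.rpow_le_one (Real.rpow_nonneg (tsum_nonneg fun n => habs _) _) h2 hp0.le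
    rwa [← Real.rpow_mul (tsum_nonneg fun n => habs _), one_div_mul_cancel hp0.ne',
      Real.rpow_one] at h3
  rcases eq_or_ne f 0 with rfl | hf0
  · simp [Real.zero_rpow hp0.ne']
  · have hn : 0 < ‖f‖ := norm_pos_iff.mpr hf0
    set g := ‖f‖⁻¹ • f with hgdef
    have hg1 : ‖g‖ ≤ 1 := by
      refine (norm_smul_le (‖f‖⁻¹) f).trans_eq ?_
      rw [norm_inv, norm_norm, inv_mul_cancel₀ hn.ne']
    have h4 := unit g hg1
    have h5 : (∑' n, |g (y n)| ^ p)
        = (‖f‖ ^ p)⁻¹ * ∑' n, |f (y n)| ^ p := by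
      rw [← tsum_mul_left]
      congr 1
      funext n
      have happ : g (y n) = ‖f‖⁻¹ * f (y n) := rfl
      rw [happ, abs_mul, abs_inv, abs_norm,
        Real.mul_rpow (inv_nonneg.mpr hn.le) (abs_nonneg _), Real.inv_rpow hn.le]
    rw [h5] at h4
    have hP : 0 < ‖f‖ ^ p := Real.rpow_pos_of_pos hn p
    have := mul_le_mul_of_nonneg_left h4 hP.le
    rwa [mul_one, ← mul_assoc, mul_inv_cancel₀ hP.ne', one_mul] at this

end Aux

lemma npow_rpow {a : ℝ} (ha : 0 ≤ a) (k : ℕ) (p : ℝ) : (a ^ k) ^ p = (a ^ p) ^ k := by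
  rw [← Real.rpow_natCast a k, ← Real.rpow_mul ha, mul_comm, Real.rpow_mul ha,
    Real.rpow_natCast]


/-- for every mid `p`-summable sequence `x`, the supremum defining
`‖x‖_{mid,p}` is finite, i.e. the set of double sums over the unit ball of
`ℓ_p^w(E*)` is bounded above. -/
theorem stmt_4 {E : Type*} [NormedAddCommGroup E] [NormedSpace ℝ E] [CompleteSpace E]
    (p : ℝ) (hp : 1 ≤ p) (x : ℕ → E) (hx : MidSummable p x) :
    BddAbove (Set.range fun xs : {xs : ℕ → E →L[ℝ] ℝ // WSummable p xs ∧ wNorm p xs ≤ 1} =>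
      (∑' nj : ℕ × ℕ, |xs.1 nj.1 (x nj.2)| ^ p) ^ (1 / p)) := by
  obtain ⟨hxw, hxmid⟩ := hx
  have hp0 : 0 < p := lt_of_lt_of_le one_pos hp
  have habs : ∀ (t : ℝ), 0 ≤ |t| ^ p := fun t => Real.rpow_nonneg (abs_nonneg _) p
  by_contra hB
  rw [not_bddAbove_iff] at hB
  have choice : ∀ k : ℕ, ∃ xs : {xs : ℕ → E →L[ℝ] ℝ // WSummable p xs ∧ wNorm p xs ≤ 1},
      ((k : ℝ) * (2 : ℝ) ^ ((k : ℝ) * p)) ^ (1 / p) <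
        (∑' nj : ℕ × ℕ, |xs.1 nj.1 (x nj.2)| ^ p) ^ (1 / p) := by
    intro k
    obtain ⟨v, hv, hlt⟩ := hB (((k : ℝ) * (2 : ℝ) ^ ((k : ℝ) * p)) ^ (1 / p))
    obtain ⟨xs, rfl⟩ := hv
    exact ⟨xs, hlt⟩
  choose u hu using choice
  set e : ℕ × ℕ ≃ ℕ := Denumerable.eqv (ℕ × ℕ) with he
  set c : ℕ → ℝ := fun k => (2 : ℝ)⁻¹ ^ k with hc
  have hc0 : ∀ k, (0:ℝ) < c k := fun k => pow_pos (by norm_num) k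
  set ys : ℕ → E →L[ℝ] ℝ := fun m => c (e.symm m).1 • (u (e.symm m).1).1 (e.symm m).2 with hys
  have hkey : ∀ (k n : ℕ) (f : (E →L[ℝ] ℝ) →L[ℝ] ℝ),
      |f (c k • (u k).1 n)| ^ p = c k ^ p * |f ((u k).1 n)| ^ p := by
    intro k n f
    rw [map_smul, smul_eq_mul, abs_mul, abs_of_pos (hc0 k),
      Real.mul_rpow (hc0 k).le (abs_nonneg _)]
  have hkey2 : ∀ (k n : ℕ) (v : E), |(c k • (u k).1 n) v| ^ p = c k ^ p * |(u k).1 n v| ^ p := by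
    intro k n v
    have happ : (c k • (u k).1 n) v = c k * ((u k).1 n v) := rfl
    rw [happ, abs_mul, abs_of_pos (hc0 k), Real.mul_rpow (hc0 k).le (abs_nonneg _)]
  have hgeo : Summable fun k : ℕ => c k ^ p := by
    have hck : ∀ k, c k ^ p = ((2:ℝ)⁻¹ ^ p) ^ k := fun k => npow_rpow (by norm_num) k p
    simp_rw [hck]
    exact summable_geometric_of_lt_one (Real.rpow_nonneg (by norm_num) p)
      (Real.rpow_lt_one (by norm_num) (by norm_num) hp0)
  have hws : WSummable p ys := by
    intro f
    have hG : Summable fun kn : ℕ × ℕ => |f (c kn.1 • (u kn.1).1 kn.2)| ^ p := by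
      rw [summable_prod_of_nonneg (fun kn => habs _)]
      constructor
      · intro k
        simpa only [hkey] using ((u k).2.1 f).mul_left (c k ^ p)
      · refine Summable.of_nonneg_of_le (fun k => tsum_nonneg fun n => habs _) (fun k => ?_)
          (hgeo.mul_right (‖f‖ ^ p))
        calc (∑' n, |f (c k • (u k).1 n)| ^ p)
            = c k ^ p * ∑' n, |f ((u k).1 n)| ^ p := by
              simp_rw [hkey]; exact tsum_mul_left
          _ ≤ c k ^ p * ‖f‖ ^ p := by
              refine mul_le_mul_of_nonneg_left ?_ (Real.rpow_nonneg (hc0 k).le p)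
              exact wsum_le_of_wnorm_le_one hp (u k).2.1 (u k).2.2 f
    have hcomp : (fun m => |f (ys m)| ^ p)
        = (fun kn : ℕ × ℕ => |f (c kn.1 • (u kn.1).1 kn.2)| ^ p) ∘ e.symm := by
      funext m
      simp only [hys, Function.comp]
    rw [hcomp]
    exact (Equiv.summable_iff e.symm).mpr hG
  have hsum := hxmid ys hws
  set T := ∑' nj : ℕ × ℕ, |ys nj.1 (x nj.2)| ^ p with hT
  obtain ⟨K, hK⟩ := exists_nat_gt T
  have hlow : ∀ k : ℕ, (k : ℝ) < T := by
    intro k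
    set S := ∑' nj : ℕ × ℕ, |(u k).1 nj.1 (x nj.2)| ^ p with hS
    have hS0 : 0 ≤ S := tsum_nonneg fun nj => habs _
    have hSsum : Summable fun nj : ℕ × ℕ => |(u k).1 nj.1 (x nj.2)| ^ p :=
      hxmid (u k).1 (u k).2.1
    have hb0 : (0:ℝ) ≤ (k : ℝ) * (2:ℝ) ^ ((k:ℝ) * p) :=
      mul_nonneg (Nat.cast_nonneg k) (Real.rpow_nonneg (by norm_num) _)
    have h1 : (k : ℝ) * (2:ℝ) ^ ((k:ℝ) * p) < S := by
      have h2 := Real.rpow_lt_rpow (Real.rpow_nonneg hb0 _) (hu k) hp0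
      rwa [← Real.rpow_mul hb0, ← Real.rpow_mul hS0, one_div_mul_cancel hp0.ne',
        Real.rpow_one, Real.rpow_one] at h2
    have hinj : Function.Injective (fun nj : ℕ × ℕ => (e (k, nj.1), nj.2)) := by
      intro a b hab
      simp only [Prod.mk.injEq] at hab
      obtain ⟨h1', h2'⟩ := hab
      have h3 := e.injective h1'
      simp only [Prod.mk.injEq] at h3
      exact Prod.ext h3.2 h2'
    have hblocksum : Summable fun nj : ℕ × ℕ => c k ^ p * |(u k).1 nj.1 (x nj.2)| ^ p :=
      hSsum.mul_left _
    have hle : (∑' nj : ℕ × ℕ, c k ^ p * |(u k).1 nj.1 (x nj.2)| ^ p) ≤ T := by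
      refine Summable.tsum_le_tsum_of_inj _ hinj (fun m _ => habs _) (fun nj => ?_) hblocksum hsum
      have hblock : ys (e (k, nj.1)) = c k • (u k).1 nj.1 := by
        simp only [hys, Equiv.symm_apply_apply]
      rw [hblock, hkey2 k nj.1 (x nj.2)]
    have heq : (∑' nj : ℕ × ℕ, c k ^ p * |(u k).1 nj.1 (x nj.2)| ^ p) = c k ^ p * S :=
      tsum_mul_left
    have hcp : 0 < c k ^ p := Real.rpow_pos_of_pos (hc0 k) p
    have hck2 : c k ^ p * (2:ℝ) ^ ((k:ℝ) * p) = 1 := by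
      have h2 : c k ^ p = ((2:ℝ) ^ ((k:ℝ) * p))⁻¹ := by
        rw [show c k = (2:ℝ)⁻¹ ^ k from rfl, npow_rpow (by norm_num) k p,
          Real.inv_rpow (by norm_num), inv_pow, ← Real.rpow_natCast ((2:ℝ) ^ p) k,
          ← Real.rpow_mul (by norm_num), mul_comm p (k:ℝ)]
      rw [h2, inv_mul_cancel₀ (Real.rpow_pos_of_pos (by norm_num) _).ne']
    have hlt : (k:ℝ) < c k ^ p * S := by
      calc (k:ℝ) = c k ^ p * ((k:ℝ) * (2:ℝ) ^ ((k:ℝ) * p)) := by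
            rw [mul_left_comm, hck2, mul_one]
        _ < c k ^ p * S := mul_lt_mul_of_pos_left h1 hcp
    exact hlt.trans_le (heq ▸ hle)
  exact absurd (hlow K) (not_lt.mpr hK.le)
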